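/- The total number of subgroups of ZM(m,n,r) equals the sum over all divisors m₁ of m and n₁ of n of gcd(m₁, (r^n−1)/(r^{n₁}−1)). -/

import Mathlib

/-- The relators of the Zassenhaus metacyclic group
`ZM(m,n,r) = ⟨a, b | a^m = b^n = 1, b⁻¹ab = a^r⟩`. -/
def ZMrel (m n r : ℕ) : Set (FreeGroup (Fin 2)) :=
  {FreeGroup.of 0 ^ m, FreeGroup.of 1 ^ n,
   (FreeGroup.of 1)⁻¹ * FreeGroup.of 0 * FreeGroup.of 1 * (FreeGroup.of 0 ^ r)⁻¹}

/-- The ZM-group `ZM(m,n,r)` as a presented group. -/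
abbrev ZM (m n r : ℕ) : Type := PresentedGroup (ZMrel m n r)

/-- The generator `a` of `ZM(m,n,r)`. -/
def za (m n r : ℕ) : ZM m n r := PresentedGroup.of 0

/-- The generator `b` of `ZM(m,n,r)`. -/
def zb (m n r : ℕ) : ZM m n r := PresentedGroup.of 1


open Finset

namespace ZMproof

open Classical in
/-- `r` as a unit of `ZMod m` (junk value `1` if hypotheses fail). -/
noncomputable def ru (m n r : ℕ) : (ZMod m)ˣ :=
  if h : ((r : ZMod m)) ^ n = 1 ∧ IsUnit ((r : ZMod m)) then h.2.unit else 1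

lemma ru_pow_n (m n r : ℕ) : (ru m n r) ^ n = 1 := by
  unfold ru; split
  · rename_i h
    apply Units.ext
    rw [Units.val_pow_eq_pow_val, IsUnit.unit_spec, h.1, Units.val_one]
  · exact one_pow n

lemma ru_coe (m n r : ℕ) (h : ((r : ZMod m)) ^ n = 1 ∧ IsUnit ((r : ZMod m))) :
    ((ru m n r : (ZMod m)ˣ) : ZMod m) = (r : ZMod m) := by
  unfold ru; rw [dif_pos h, IsUnit.unit_spec]

/-- multiplication by a unit as an automorphism of `Multiplicative (ZMod m)`. -/
def rAut (m : ℕ) : (ZMod m)ˣ →* MulAut (Multiplicative (ZMod m)) where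
  toFun v :=
    { toFun := fun x => .ofAdd ((v : ZMod m) * x.toAdd)
      invFun := fun x => .ofAdd (((v⁻¹ : (ZMod m)ˣ) : ZMod m) * x.toAdd)
      left_inv := fun x => by simp [← mul_assoc, ← Units.val_mul]
      right_inv := fun x => by simp [← mul_assoc, ← Units.val_mul]
      map_mul' := fun x y => by
        simp [mul_add] }
  map_one' := by ext x; simp
  map_mul' v w := by ext x; simp [mul_assoc]

/-- The action of `ZMod n` on `ZMod m` by multiplication by `r`. -/
noncomputable def φZ (m n r : ℕ) [NeZero n] :
    Multiplicative (ZMod n) →* MulAut (Multiplicative (ZMod m)) where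
  toFun y := rAut m (ru m n r ^ (Multiplicative.toAdd y).val)
  map_one' := by
    show rAut m (ru m n r ^ (Multiplicative.toAdd (1 : Multiplicative (ZMod n))).val) = 1
    have h : (Multiplicative.toAdd (1 : Multiplicative (ZMod n))).val = 0 := by
      simp [ZMod.val_zero]
    rw [h, pow_zero, map_one]
  map_mul' y₁ y₂ := by
    have h : ru m n r ^ (Multiplicative.toAdd (y₁ * y₂)).val
        = ru m n r ^ (Multiplicative.toAdd y₁).val * ru m n r ^ (Multiplicative.toAdd y₂).val := by
      rw [← pow_add, toAdd_mul, ZMod.val_add, ← pow_eq_pow_mod _ (ru_pow_n m n r)]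
    simp only [h, map_mul]

/-- The model group: `ZMod m ⋊ ZMod n`. -/
abbrev GG (m n r : ℕ) [NeZero n] : Type :=
  (Multiplicative (ZMod m)) ⋊[φZ m n r] (Multiplicative (ZMod n))

/-- The element `(w, v)` of the model group, for natural numbers `w v`. -/
noncomputable def velem (m n r : ℕ) [NeZero n] (w v : ℕ) : GG m n r :=
  ⟨.ofAdd ((w : ZMod m)), .ofAdd ((v : ZMod n))⟩

end ZMproof

namespace ZMproof
/-- geometric sum `1 + r^k + ... + r^(k(j-1))`. -/
def geo (r k j : ℕ) : ℕ := ∑ i ∈ Finset.range j, (r ^ k) ^ i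

lemma geo_zero (r k : ℕ) : geo r k 0 = 0 := by simp [geo]
lemma geo_one (r k : ℕ) : geo r k 1 = 1 := by simp [geo]

lemma geo_add (r k j₁ j₂ : ℕ) :
    geo r k (j₁ + j₂) = geo r k j₁ + (r ^ k) ^ j₁ * geo r k j₂ := by
  unfold geo
  rw [Finset.sum_range_add, Finset.mul_sum]
  congr 1
  exact Finset.sum_congr rfl fun i _ => by rw [← pow_add]

lemma geo_mul (r k q t : ℕ) : geo r k (q * t) = geo r k q * geo r (k * q) t := by
  induction t with
  | zero => simp [geo_zero]
  | succ t ih =>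
      have h1 : q * (t + 1) = q * t + q := by ring
      rw [h1, geo_add, ih]
      have h2 : geo r (k * q) (t + 1) = geo r (k * q) t + (r ^ (k * q)) ^ t * 1 := by
        have := geo_add r (k * q) t 1
        rwa [geo_one] at this
      rw [h2]
      have h3 : (r ^ k) ^ (q * t) = (r ^ (k * q)) ^ t := by
        rw [← pow_mul, ← pow_mul]; ring_nf
      rw [h3]; ring

section
variable (m n r : ℕ) [NeZero n]

lemma velem_right (w v : ℕ) :
    (velem m n r w v).right = Multiplicative.ofAdd ((v : ZMod n)) := rfl

lemma velem_left (w v : ℕ) :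
    (velem m n r w v).left = Multiplicative.ofAdd ((w : ZMod m)) := rfl

variable (hu : ((ru m n r : (ZMod m)ˣ) : ZMod m) = (r : ZMod m))
include hu

lemma phi_apply (v : ℕ) (x : ZMod m) :
    (φZ m n r (Multiplicative.ofAdd ((v : ZMod n)))) (Multiplicative.ofAdd x)
      = Multiplicative.ofAdd ((r : ZMod m) ^ v * x) := by
  show rAut m (ru m n r ^ (Multiplicative.toAdd (Multiplicative.ofAdd ((v : ZMod n)))).val)
      (Multiplicative.ofAdd x) = Multiplicative.ofAdd ((r : ZMod m) ^ v * x)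
  have h1 : (Multiplicative.toAdd (Multiplicative.ofAdd ((v : ZMod n)))).val = v % n := by
    simp [ZMod.val_natCast]
  rw [h1, ← pow_eq_pow_mod _ (ru_pow_n m n r)]
  show Multiplicative.ofAdd (((ru m n r ^ v : (ZMod m)ˣ) : ZMod m) * x) = _
  rw [Units.val_pow_eq_pow_val, hu]

lemma velem_mul (w v w' v' : ℕ) :
    velem m n r w v * velem m n r w' v' = velem m n r (w + r ^ v * w') (v + v') := by
  apply SemidirectProduct.ext
  · rw [SemidirectProduct.mul_left]
    show Multiplicative.ofAdd ((w : ZMod m)) *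
        (φZ m n r (Multiplicative.ofAdd ((v : ZMod n)))) (Multiplicative.ofAdd ((w' : ZMod m)))
        = Multiplicative.ofAdd (((w + r ^ v * w' : ℕ) : ZMod m))
    rw [phi_apply m n r hu]
    rw [← ofAdd_add]
    congr 1
    push_cast
    ring
  · rw [SemidirectProduct.mul_right]
    show Multiplicative.ofAdd ((v : ZMod n)) * Multiplicative.ofAdd ((v' : ZMod n))
        = Multiplicative.ofAdd (((v + v' : ℕ) : ZMod n))
    rw [← ofAdd_add]
    congr 1
    push_cast
    ring

omit hu in
lemma velem_one : velem m n r 0 0 = 1 := by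
  apply SemidirectProduct.ext <;> simp [velem]

lemma velem_pow (w v : ℕ) (j : ℕ) :
    (velem m n r w v) ^ j = velem m n r (w * geo r v j) (v * j) := by
  induction j with
  | zero => simp [geo_zero, velem_one]
  | succ j ih =>
      rw [pow_succ, ih, velem_mul m n r hu]
      have h1 : w * geo r v j + r ^ (v * j) * w = w * geo r v (j + 1) := by
        have := geo_add r v j 1
        rw [geo_one] at this
        rw [this, pow_mul]
        ring
      have h2 : v * j + v = v * (j + 1) := by ring
      rw [h1, h2]

omit hu in
lemma velem_congr {w v w' v' : ℕ} (h1 : w ≡ w' [MOD m]) (h2 : v ≡ v' [MOD n]) :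
    velem m n r w v = velem m n r w' v' := by
  unfold velem
  rw [(ZMod.natCast_eq_natCast_iff _ _ _).2 h1, (ZMod.natCast_eq_natCast_iff _ _ _).2 h2]

omit hu in
lemma velem_inj {w v w' v' : ℕ} (h : velem m n r w v = velem m n r w' v') :
    w ≡ w' [MOD m] ∧ v ≡ v' [MOD n] := by
  unfold velem at h
  rw [SemidirectProduct.ext_iff] at h
  constructor
  · exact (ZMod.natCast_eq_natCast_iff _ _ _).1 (Multiplicative.ofAdd.injective h.1)
  · exact (ZMod.natCast_eq_natCast_iff _ _ _).1 (Multiplicative.ofAdd.injective h.2)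

end
end ZMproof

namespace ZMproof

/-- the set of casts of multiples of `k` in `ZMod n`. -/
def cam (n k : ℕ) : Set (ZMod n) := Set.range (fun j : ℕ => ((k * j : ℕ) : ZMod n))

lemma cam_mem (n k j : ℕ) : ((k * j : ℕ) : ZMod n) ∈ cam n k := ⟨j, rfl⟩

lemma exists_cam (n : ℕ) (hn : 0 < n) (P : Set (ZMod n)) (h0 : (0 : ZMod n) ∈ P)
    (hadd : ∀ x ∈ P, ∀ y ∈ P, x + y ∈ P) (hneg : ∀ x ∈ P, -x ∈ P) :
    ∃ k, 0 < k ∧ k ∣ n ∧ P = cam n k := by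
  haveI : NeZero n := ⟨hn.ne'⟩
  have hex : ∃ v, 0 < v ∧ ((v : ℕ) : ZMod n) ∈ P := ⟨n, hn, by simp [h0]⟩
  classical
  set k := Nat.find hex with hkdef
  obtain ⟨hkpos, hkP⟩ := Nat.find_spec hex
  have hmult : ∀ j : ℕ, ((k * j : ℕ) : ZMod n) ∈ P := by
    intro j
    induction j with
    | zero => simpa using h0
    | succ j ih =>
        have h : ((k * (j + 1) : ℕ) : ZMod n) = ((k * j : ℕ) : ZMod n) + ((k : ℕ) : ZMod n) := by
          push_cast; ring
        rw [h]
        exact hadd _ ih _ hkP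
  have hkey : ∀ v : ℕ, ((v : ℕ) : ZMod n) ∈ P → k ∣ v := by
    intro v hv
    have h1 : ((v : ℕ) : ZMod n) = ((k * (v / k) : ℕ) : ZMod n) + ((v % k : ℕ) : ZMod n) := by
      conv_lhs => rw [← Nat.div_add_mod v k]
      push_cast; ring
    have hmem : ((v % k : ℕ) : ZMod n) ∈ P := by
      have h2 : ((v % k : ℕ) : ZMod n)
          = ((v : ℕ) : ZMod n) + -((k * (v / k) : ℕ) : ZMod n) := by
        rw [h1]; ring
      rw [h2]
      exact hadd _ hv _ (hneg _ (hmult (v / k)))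
    by_contra hdvd
    have hpos : 0 < v % k := Nat.pos_of_ne_zero (fun h => hdvd (Nat.dvd_of_mod_eq_zero h))
    exact Nat.find_min hex (Nat.mod_lt v hkpos) ⟨hpos, hmem⟩
  have hdvdn : k ∣ n := hkey n (by simp [h0])
  refine ⟨k, hkpos, hdvdn, ?_⟩
  ext x
  constructor
  · intro hx
    have hx' : ((x.val : ℕ) : ZMod n) ∈ P := by
      rw [ZMod.natCast_rightInverse x]; exact hx
    refine ⟨x.val / k, ?_⟩
    show ((k * (x.val / k) : ℕ) : ZMod n) = x
    rw [Nat.mul_div_cancel' (hkey x.val hx')]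
    exact ZMod.natCast_rightInverse x
  · rintro ⟨j, rfl⟩
    exact hmult j

lemma cam_dvd_of_subset {n k k' : ℕ} (hn : 0 < n) (hk : k ∣ n)
    (h : ((k' : ℕ) : ZMod n) ∈ cam n k) : k ∣ k' := by
  obtain ⟨j, hj⟩ := h
  have := (ZMod.natCast_eq_natCast_iff _ _ _).1 hj.symm
  have h2 : k' ≡ k * j [MOD k] := this.of_dvd hk
  have h3 : k * j ≡ 0 [MOD k] := (Nat.modEq_zero_iff_dvd).2 ⟨j, rfl⟩
  exact (Nat.modEq_zero_iff_dvd).1 (h2.trans h3)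

lemma cam_inj {n k k' : ℕ} (hn : 0 < n) (hk : k ∣ n) (hk' : k' ∣ n)
    (h : cam n k = cam n k') : k = k' := by
  have h1 : k' ∣ k := cam_dvd_of_subset hn hk' (h ▸ (by simpa using cam_mem n k 1))
  have h2 : k ∣ k' := cam_dvd_of_subset hn hk (h ▸ (by simpa using cam_mem n k' 1) : _)
  exact Nat.dvd_antisymm h2 h1

end ZMproof

namespace ZMproof
section
variable (m n r : ℕ) [NeZero m] [NeZero n]

/-- `GG` is equivalent to a product, hence finite. -/
def ggEquiv : GG m n r ≃ Multiplicative (ZMod m) × Multiplicative (ZMod n) :=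
  ⟨fun g => (g.left, g.right), fun p => ⟨p.1, p.2⟩, fun _ => rfl, fun _ => rfl⟩

instance : Finite (GG m n r) := Finite.of_equiv _ (ggEquiv m n r).symm

/-- carrier of the subgroup indexed by `(d, k, s)`. -/
def sset (d k s : ℕ) : Set (GG m n r) :=
  {g | ∃ j a : ℕ, g = velem m n r (s * geo r k j + d * a) (k * j)}

lemma sset_one_mem (d k s : ℕ) : (1 : GG m n r) ∈ sset m n r d k s :=
  ⟨0, 0, by rw [geo_zero]; simpa using (velem_one m n r).symm⟩

variable (hu : ((ru m n r : (ZMod m)ˣ) : ZMod m) = (r : ZMod m))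
include hu

lemma sset_mul_mem (d k s : ℕ) {g g' : GG m n r} (hg : g ∈ sset m n r d k s)
    (hg' : g' ∈ sset m n r d k s) : g * g' ∈ sset m n r d k s := by
  obtain ⟨j, a, rfl⟩ := hg
  obtain ⟨j', a', rfl⟩ := hg'
  refine ⟨j + j', a + r ^ (k * j) * a', ?_⟩
  rw [velem_mul m n r hu]
  have h1 : s * geo r k j + d * a + r ^ (k * j) * (s * geo r k j' + d * a')
      = s * geo r k (j + j') + d * (a + r ^ (k * j) * a') := by
    rw [geo_add, ← pow_mul]; ring
  have h2 : k * j + k * j' = k * (j + j') := by ring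
  rw [h1, h2]

lemma sset_pow_mem (d k s : ℕ) {g : GG m n r} (hg : g ∈ sset m n r d k s) (p : ℕ) :
    g ^ p ∈ sset m n r d k s := by
  induction p with
  | zero => simpa using sset_one_mem m n r d k s
  | succ p ih => rw [pow_succ]; exact sset_mul_mem m n r hu d k s ih hg

lemma sset_inv_mem (d k s : ℕ) {g : GG m n r} (hg : g ∈ sset m n r d k s) :
    g⁻¹ ∈ sset m n r d k s := by
  have he : 0 < orderOf g := orderOf_pos g
  have h1 : g * g ^ (orderOf g - 1) = 1 := by
    rw [← pow_succ', Nat.sub_add_cancel he, pow_orderOf_eq_one]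
  rw [inv_eq_of_mul_eq_one_right h1]
  exact sset_pow_mem m n r hu d k s hg _

/-- The subgroup of `GG` indexed by `(d, k, s)`. -/
def SS (d k s : ℕ) : Subgroup (GG m n r) where
  carrier := sset m n r d k s
  one_mem' := sset_one_mem m n r d k s
  mul_mem' := fun h h' => sset_mul_mem m n r hu d k s h h'
  inv_mem' := fun h => sset_inv_mem m n r hu d k s h

lemma SS_coe (d k s : ℕ) : (SS m n r hu d k s : Set (GG m n r)) = sset m n r d k s := rfl

end
end ZMproof

namespace ZMproof

lemma geo_step (r d k s q : ℕ) (hs : d ∣ s * geo r k q) (j t : ℕ) :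
    s * geo r k (j + q * t) ≡ s * geo r k j [MOD d] := by
  rw [geo_add, geo_mul]
  have h1 : s * (geo r k j + (r ^ k) ^ j * (geo r k q * geo r (k * q) t))
      = s * geo r k j + ((r ^ k) ^ j * geo r (k * q) t) * (s * geo r k q) := by ring
  rw [h1]
  obtain ⟨c, hc⟩ := hs
  rw [hc]
  have : s * geo r k j + (r ^ k) ^ j * geo r (k * q) t * (d * c)
      = s * geo r k j + d * ((r ^ k) ^ j * geo r (k * q) t * c) := by ring
  rw [this]
  have h2 : d * ((r ^ k) ^ j * geo r (k * q) t * c) ≡ 0 [MOD d] :=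
    (Nat.modEq_zero_iff_dvd).2 ⟨_, rfl⟩
  simpa using Nat.ModEq.add_left (s * geo r k j) h2

lemma geo_cong (r d k s q : ℕ) (hq : 0 < q) (hs : d ∣ s * geo r k q) {j j₀ : ℕ}
    (hj : j ≡ j₀ [MOD q]) : s * geo r k j ≡ s * geo r k j₀ [MOD d] := by
  set J := j₀ + q * j with hJ
  have hJj₀ : s * geo r k J ≡ s * geo r k j₀ [MOD d] := geo_step r d k s q hs j₀ j
  have hle : j ≤ J := le_trans (Nat.le_mul_of_pos_left j hq) (Nat.le_add_left _ _)
  have hJcong : j ≡ J [MOD q] := by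
    have h1 : J ≡ j₀ [MOD q] := by
      have h2 : q * j ≡ 0 [MOD q] := (Nat.modEq_zero_iff_dvd).2 ⟨_, rfl⟩
      simpa [hJ] using Nat.ModEq.add_left j₀ h2
    exact (h1.trans hj.symm).symm
  have hdvd : q ∣ J - j := (Nat.modEq_iff_dvd' hle).1 hJcong
  have hJeq : J = j + q * ((J - j) / q) := by
    rw [Nat.mul_div_cancel' hdvd, Nat.add_sub_cancel' hle]
  have hJj : s * geo r k J ≡ s * geo r k j [MOD d] := by
    conv_lhs => rw [hJeq]
    exact geo_step r d k s q hs j _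
  exact hJj.symm.trans hJj₀

section
variable (m n r : ℕ) [NeZero m] [NeZero n]

lemma mk_velem (x : ZMod m) (y : ZMod n) :
    (⟨Multiplicative.ofAdd x, Multiplicative.ofAdd y⟩ : GG m n r) = velem m n r x.val y.val := by
  unfold velem
  rw [ZMod.natCast_rightInverse x, ZMod.natCast_rightInverse y]

lemma mem_sset_iff {d k s : ℕ} (hd : d ∣ m) (hk : k ∣ n)
    (hs : d ∣ s * geo r k (n / k)) (x : ZMod m) (j₀ : ℕ) :
    ((⟨Multiplicative.ofAdd x, Multiplicative.ofAdd ((k * j₀ : ℕ) : ZMod n)⟩ : GG m n r)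
      ∈ sset m n r d k s)
      ↔ ∃ a : ℕ, x = ((s * geo r k j₀ + d * a : ℕ) : ZMod m) := by
  have hn : 0 < n := Nat.pos_of_ne_zero (NeZero.ne n)
  have hm : 0 < m := Nat.pos_of_ne_zero (NeZero.ne m)
  have hkpos : 0 < k := Nat.pos_of_dvd_of_pos hk hn
  have hqpos : 0 < n / k := Nat.div_pos (Nat.le_of_dvd hn hk) hkpos
  constructor
  · rintro ⟨j, a, heq⟩
    unfold velem at heq
    rw [SemidirectProduct.ext_iff] at heq
    have hx : x = ((s * geo r k j + d * a : ℕ) : ZMod m) :=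
      Multiplicative.ofAdd.injective heq.1
    have hy : ((k * j₀ : ℕ) : ZMod n) = ((k * j : ℕ) : ZMod n) :=
      Multiplicative.ofAdd.injective heq.2
    have hcong : k * j₀ ≡ k * j [MOD n] := (ZMod.natCast_eq_natCast_iff _ _ _).1 hy
    have hj : j ≡ j₀ [MOD n / k] := by
      have hn' : n = k * (n / k) := (Nat.mul_div_cancel' hk).symm
      rw [hn'] at hcong
      exact (Nat.ModEq.mul_left_cancel' hkpos.ne' hcong).symm
    have hgeo : s * geo r k j ≡ s * geo r k j₀ [MOD d] := geo_cong r d k s _ hqpos hs hj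
    set N := s * geo r k j + d * a + m * (s * geo r k j₀) with hN
    have hxN : x = ((N : ℕ) : ZMod m) := by
      rw [hx, hN]; push_cast; rw [ZMod.natCast_self]; ring
    have hNc : N ≡ s * geo r k j₀ [MOD d] := by
      have h1 : N ≡ s * geo r k j + 0 + 0 [MOD d] := by
        refine Nat.ModEq.add ?_ ?_
        · exact Nat.ModEq.add_left _ ((Nat.modEq_zero_iff_dvd).2 ⟨a, rfl⟩)
        · exact (Nat.modEq_zero_iff_dvd).2 (Dvd.dvd.mul_right (dvd_trans hd ⟨1, by ring⟩) _)
      simpa using h1.trans (by simpa using hgeo)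
    have hle : s * geo r k j₀ ≤ N := by
      have : s * geo r k j₀ ≤ m * (s * geo r k j₀) := Nat.le_mul_of_pos_left _ hm
      omega
    have hdvd : d ∣ N - s * geo r k j₀ := (Nat.modEq_iff_dvd' hle).1 hNc.symm
    refine ⟨(N - s * geo r k j₀) / d, ?_⟩
    rw [hxN]
    congr 1
    rw [Nat.mul_div_cancel' hdvd, Nat.add_sub_cancel' hle]
  · rintro ⟨a, rfl⟩
    exact ⟨j₀, a, rfl⟩

end
end ZMproof

namespace ZMproof
section
variable (m n r : ℕ) [NeZero m] [NeZero n]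

lemma kslice (d k s : ℕ) :
    {y : ZMod n | ∃ x : Multiplicative (ZMod m),
        (⟨x, Multiplicative.ofAdd y⟩ : GG m n r) ∈ sset m n r d k s} = cam n k := by
  ext y
  constructor
  · rintro ⟨x, j, a, heq⟩
    rw [SemidirectProduct.ext_iff] at heq
    exact ⟨j, (Multiplicative.ofAdd.injective heq.2).symm⟩
  · rintro ⟨j, rfl⟩
    exact ⟨Multiplicative.ofAdd ((s * geo r k j + d * 0 : ℕ) : ZMod m), j, 0, rfl⟩

lemma dslice {d k s : ℕ} (hd : d ∣ m) (hk : k ∣ n) (hs : d ∣ s * geo r k (n / k)) :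
    {x : ZMod m | (⟨Multiplicative.ofAdd x, 1⟩ : GG m n r) ∈ sset m n r d k s} = cam m d := by
  have h1 : (1 : Multiplicative (ZMod n)) = Multiplicative.ofAdd ((k * 0 : ℕ) : ZMod n) := by
    simp
  ext x
  rw [Set.mem_setOf_eq, h1, mem_sset_iff m n r hd hk hs x 0]
  constructor
  · rintro ⟨a, rfl⟩
    exact ⟨a, by rw [geo_zero]; push_cast; ring⟩
  · rintro ⟨a, rfl⟩
    exact ⟨a, by rw [geo_zero]; push_cast; ring⟩

lemma sslice {d k s : ℕ} (hd : d ∣ m) (hk : k ∣ n) (hs : d ∣ s * geo r k (n / k)) :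
    {x : ZMod m | (⟨Multiplicative.ofAdd x, Multiplicative.ofAdd ((k : ZMod n))⟩ : GG m n r)
        ∈ sset m n r d k s}
      = {x : ZMod m | ∃ a : ℕ, x = ((s + d * a : ℕ) : ZMod m)} := by
  have h1 : ((k : ZMod n)) = ((k * 1 : ℕ) : ZMod n) := by push_cast; ring
  ext x
  rw [Set.mem_setOf_eq, h1, mem_sset_iff m n r hd hk hs x 1]
  constructor
  · rintro ⟨a, rfl⟩
    exact ⟨a, by rw [geo_one]; push_cast; ring⟩
  · rintro ⟨a, rfl⟩
    exact ⟨a, by rw [geo_one]; push_cast; ring⟩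

lemma sset_injective {d k s d' k' s' : ℕ}
    (hd : d ∣ m) (hk : k ∣ n) (hs : d ∣ s * geo r k (n / k)) (hslt : s < d)
    (hd' : d' ∣ m) (hk' : k' ∣ n) (hs' : d' ∣ s' * geo r k' (n / k')) (hslt' : s' < d')
    (heq : sset m n r d k s = sset m n r d' k' s') : d = d' ∧ k = k' ∧ s = s' := by
  have hn : 0 < n := Nat.pos_of_ne_zero (NeZero.ne n)
  have hm : 0 < m := Nat.pos_of_ne_zero (NeZero.ne m)
  have hkk : k = k' := by
    apply cam_inj hn hk hk'
    rw [← kslice m n r d k s, heq, kslice]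
  have hdd : d = d' := by
    apply cam_inj hm hd hd'
    rw [← dslice m n r hd hk hs, heq, dslice m n r hd' hk' hs']
  subst hkk; subst hdd
  refine ⟨rfl, rfl, ?_⟩
  have h2 : {x : ZMod m | ∃ a : ℕ, x = ((s + d * a : ℕ) : ZMod m)}
      = {x : ZMod m | ∃ a : ℕ, x = ((s' + d * a : ℕ) : ZMod m)} := by
    rw [← sslice m n r hd hk hs, heq, sslice m n r hd' hk' hs']
  have h3 : ((s : ℕ) : ZMod m) ∈ {x : ZMod m | ∃ a : ℕ, x = ((s + d * a : ℕ) : ZMod m)} :=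
    ⟨0, by push_cast; ring⟩
  rw [h2] at h3
  obtain ⟨a, ha⟩ := h3
  have h4 : s ≡ s' + d * a [MOD m] := (ZMod.natCast_eq_natCast_iff _ _ _).1 ha
  have h5 : s ≡ s' [MOD d] := by
    have h6 := h4.of_dvd hd
    have h7 : s' + d * a ≡ s' [MOD d] := by
      have := (Nat.modEq_zero_iff_dvd).2 (⟨a, rfl⟩ : d ∣ d * a)
      simpa using Nat.ModEq.add_left s' this
    exact h6.trans h7
  have := h5
  unfold Nat.ModEq at this
  rwa [Nat.mod_eq_of_lt hslt, Nat.mod_eq_of_lt hslt'] at this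

end
end ZMproof

namespace ZMproof
section
variable (m n r : ℕ) [NeZero m] [NeZero n]
variable (hu : ((ru m n r : (ZMod m)ˣ) : ZMod m) = (r : ZMod m))
include hu

lemma sset_surjective (hrn : r ^ n ≡ 1 [MOD m]) (H : Subgroup (GG m n r)) :
    ∃ d k s : ℕ, d ∣ m ∧ k ∣ n ∧ s < d ∧ d ∣ s * geo r k (n / k) ∧
      (H : Set (GG m n r)) = sset m n r d k s := by
  have hn : 0 < n := Nat.pos_of_ne_zero (NeZero.ne n)
  have hm : 0 < m := Nat.pos_of_ne_zero (NeZero.ne m)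
  -- the image of H in ZMod n
  obtain ⟨k, hkpos, hk, hKeq⟩ := exists_cam n hn
      {y : ZMod n | ∃ x : Multiplicative (ZMod m), (⟨x, Multiplicative.ofAdd y⟩ : GG m n r) ∈ H}
      (⟨1, by
        have h : (⟨1, Multiplicative.ofAdd (0 : ZMod n)⟩ : GG m n r) = 1 := by
          apply SemidirectProduct.ext <;> simp
        rw [h]; exact H.one_mem⟩)
      (by
        rintro y₁ ⟨x₁, hx₁⟩ y₂ ⟨x₂, hx₂⟩
        set g := (⟨x₁, Multiplicative.ofAdd y₁⟩ : GG m n r) * ⟨x₂, Multiplicative.ofAdd y₂⟩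
          with hg
        refine ⟨g.left, ?_⟩
        have h : (⟨g.left, Multiplicative.ofAdd (y₁ + y₂)⟩ : GG m n r) = g := by
          apply SemidirectProduct.ext
          · rfl
          · rw [SemidirectProduct.mul_right]; rfl
        rw [h]
        exact H.mul_mem hx₁ hx₂)
      (by
        rintro y ⟨x, hx⟩
        set g := (⟨x, Multiplicative.ofAdd y⟩ : GG m n r)⁻¹ with hg
        refine ⟨g.left, ?_⟩
        have h : (⟨g.left, Multiplicative.ofAdd (-y)⟩ : GG m n r) = g := by
          apply SemidirectProduct.ext
          · rfl
          · rw [hg, SemidirectProduct.inv_right]; rfl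
        rw [h]
        exact H.inv_mem hx)
  -- the intersection of H with ZMod m
  obtain ⟨d, hdpos, hd, hDeq⟩ := exists_cam m hm
      {x : ZMod m | (⟨Multiplicative.ofAdd x, 1⟩ : GG m n r) ∈ H}
      (by
        have h : (⟨Multiplicative.ofAdd (0 : ZMod m), 1⟩ : GG m n r) = 1 := by
          apply SemidirectProduct.ext <;> simp
        show _ ∈ H
        rw [h]; exact H.one_mem)
      (by
        intro x₁ hx₁ x₂ hx₂
        have h : (⟨Multiplicative.ofAdd (x₁ + x₂), 1⟩ : GG m n r)
            = (⟨Multiplicative.ofAdd x₁, 1⟩ : GG m n r) * ⟨Multiplicative.ofAdd x₂, 1⟩ := by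
          apply SemidirectProduct.ext
          · rw [SemidirectProduct.mul_left]
            show Multiplicative.ofAdd (x₁ + x₂)
                = Multiplicative.ofAdd x₁ * (φZ m n r 1) (Multiplicative.ofAdd x₂)
            rw [map_one]
            rfl
          · rw [SemidirectProduct.mul_right]; simp
        show _ ∈ H
        rw [h]; exact H.mul_mem hx₁ hx₂)
      (by
        intro x hx
        have h : (⟨Multiplicative.ofAdd (-x), 1⟩ : GG m n r)
            = (⟨Multiplicative.ofAdd x, 1⟩ : GG m n r)⁻¹ := by
          apply SemidirectProduct.ext
          · rw [SemidirectProduct.inv_left]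
            show Multiplicative.ofAdd (-x) = (φZ m n r 1⁻¹) (Multiplicative.ofAdd x)⁻¹
            rw [inv_one, map_one]
            rfl
          · rw [SemidirectProduct.inv_right]; simp
        show _ ∈ H
        rw [h]; exact H.inv_mem hx)
  -- a generator over the image
  have hkK : ((k : ℕ) : ZMod n)
      ∈ {y : ZMod n | ∃ x : Multiplicative (ZMod m),
          (⟨x, Multiplicative.ofAdd y⟩ : GG m n r) ∈ H} := by
    rw [hKeq]; simpa using cam_mem n k 1
  obtain ⟨x₀, hx₀⟩ := hkK
  set s₀ := (Multiplicative.toAdd x₀).val with hs₀def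
  have hpair : (⟨x₀, Multiplicative.ofAdd ((k : ZMod n))⟩ : GG m n r) = velem m n r s₀ k := by
    conv_lhs => rw [← ofAdd_toAdd x₀]
    rw [mk_velem m n r]
    exact velem_congr m n r (Nat.ModEq.refl _)
      (by rw [ZMod.val_natCast]; exact Nat.mod_modEq k n)
  have hv : velem m n r s₀ k ∈ H := by rw [← hpair]; exact hx₀
  set q := n / k with hqdef
  have hkq : k * q = n := Nat.mul_div_cancel' hk
  have h6 : velem m n r (s₀ * geo r k q) (k * q) ∈ H := by
    rw [← velem_pow m n r hu]; exact H.pow_mem hv q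
  have h7 : ((s₀ * geo r k q : ℕ) : ZMod m)
      ∈ {x : ZMod m | (⟨Multiplicative.ofAdd x, 1⟩ : GG m n r) ∈ H} := by
    show _ ∈ H
    have h8 : (⟨Multiplicative.ofAdd ((s₀ * geo r k q : ℕ) : ZMod m), 1⟩ : GG m n r)
        = velem m n r (s₀ * geo r k q) (k * q) := by
      apply SemidirectProduct.ext
      · rfl
      · show (1 : Multiplicative (ZMod n)) = Multiplicative.ofAdd ((k * q : ℕ) : ZMod n)
        rw [hkq, ZMod.natCast_self]; rfl
    rw [h8]; exact h6
  rw [hDeq] at h7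
  obtain ⟨a₁, ha₁⟩ := h7
  have hds₀ : d ∣ s₀ * geo r k q := by
    have h9 : d * a₁ ≡ s₀ * geo r k q [MOD m] := (ZMod.natCast_eq_natCast_iff _ _ _).1 ha₁
    have h10 := (h9.of_dvd hd).symm
    have h11 : d * a₁ ≡ 0 [MOD d] := (Nat.modEq_zero_iff_dvd).2 ⟨a₁, rfl⟩
    exact (Nat.modEq_zero_iff_dvd).1 (h10.trans h11)
  set s := s₀ % d with hsdef
  have hslt : s < d := Nat.mod_lt _ hdpos
  have hsd : d ∣ s * geo r k q := by
    have h12 : s ≡ s₀ [MOD d] := Nat.mod_modEq s₀ d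
    exact (Nat.modEq_zero_iff_dvd).1
      ((h12.mul_right (geo r k q)).trans ((Nat.modEq_zero_iff_dvd).2 hds₀))
  set Q := s₀ / d with hQdef
  have hQ : s₀ = s + d * Q := by rw [hsdef, hQdef]; exact (Nat.mod_add_div s₀ d).symm
  refine ⟨d, k, s, hd, hk, hslt, hsd, ?_⟩
  ext g
  constructor
  · intro hg
    set y := Multiplicative.toAdd g.right with hy
    have hyK : y ∈ cam n k := by
      rw [← hKeq]
      refine ⟨g.left, ?_⟩
      have h1 : (⟨g.left, Multiplicative.ofAdd y⟩ : GG m n r) = g := by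
        apply SemidirectProduct.ext
        · rfl
        · show Multiplicative.ofAdd (Multiplicative.toAdd g.right) = g.right
          rw [ofAdd_toAdd]
      rw [h1]; exact hg
    obtain ⟨j, hj⟩ := hyK
    set x := Multiplicative.toAdd g.left with hx
    have hgv : g = velem m n r x.val (k * j) := by
      have h1 : g = (⟨Multiplicative.ofAdd x, Multiplicative.ofAdd y⟩ : GG m n r) := by
        apply SemidirectProduct.ext
        · show g.left = Multiplicative.ofAdd (Multiplicative.toAdd g.left)
          rw [ofAdd_toAdd]
        · show g.right = Multiplicative.ofAdd (Multiplicative.toAdd g.right)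
          rw [ofAdd_toAdd]
      rw [h1, ← hj, mk_velem m n r]
      exact velem_congr m n r (Nat.ModEq.refl _)
        (by rw [ZMod.val_natCast]; exact Nat.mod_modEq _ n)
    set W := velem m n r (s₀ * geo r k j) (k * j) with hW
    have hWH : W ∈ H := by rw [hW, ← velem_pow m n r hu]; exact H.pow_mem hv j
    set e := orderOf W with he
    have hepos : 0 < e := orderOf_pos W
    have hWe : W ^ e = 1 := pow_orderOf_eq_one W
    rw [hW, velem_pow m n r hu] at hWe
    obtain ⟨C1, C2⟩ := velem_inj m n r (hWe.trans (velem_one m n r).symm)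
    have hWp : W ^ (e - 1) = velem m n r (s₀ * geo r k j * geo r (k * j) (e - 1))
        (k * j * (e - 1)) := by rw [hW, velem_pow m n r hu]
    have ht : g * W ^ (e - 1) ∈ H := H.mul_mem hg (H.pow_mem hWH (e - 1))
    rw [hgv, hWp, velem_mul m n r hu] at ht
    have hsecond : k * j + k * j * (e - 1) = k * j * e := by
      have h2 : e - 1 + 1 = e := Nat.succ_pred_eq_of_pos hepos
      calc k * j + k * j * (e - 1) = k * j * ((e - 1) + 1) := by ring
        _ = k * j * e := by rw [h2]
    rw [hsecond] at ht
    set X := x.val + r ^ (k * j) * (s₀ * geo r k j * geo r (k * j) (e - 1)) with hX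
    have hXD : ((X : ℕ) : ZMod m) ∈ cam m d := by
      rw [← hDeq]
      show (⟨Multiplicative.ofAdd ((X : ℕ) : ZMod m), 1⟩ : GG m n r) ∈ H
      have h3 : (⟨Multiplicative.ofAdd ((X : ℕ) : ZMod m), 1⟩ : GG m n r)
          = velem m n r X (k * j * e) := by
        apply SemidirectProduct.ext
        · rfl
        · show (1 : Multiplicative (ZMod n)) = Multiplicative.ofAdd ((k * j * e : ℕ) : ZMod n)
          have h4 : ((k * j * e : ℕ) : ZMod n) = ((0 : ℕ) : ZMod n) :=
            (ZMod.natCast_eq_natCast_iff _ _ _).2 C2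
          rw [h4]; simp
      rw [h3]; exact ht
    obtain ⟨a₂, ha₂⟩ := hXD
    have hXc : X ≡ d * a₂ [MOD m] := ((ZMod.natCast_eq_natCast_iff _ _ _).1 ha₂).symm
    have hgeoe : geo r (k * j) e = 1 + r ^ (k * j) * geo r (k * j) (e - 1) := by
      have h5 := geo_add r (k * j) 1 (e - 1)
      rw [geo_one] at h5
      have h6 : 1 + (e - 1) = e := by omega
      rw [h6] at h5
      rw [h5, pow_one]
    have hiden : x.val + s₀ * geo r k j * geo r (k * j) e = X + s₀ * geo r k j := by
      rw [hX, hgeoe]; ring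
    have hxc : x.val ≡ s * geo r k j + d * (a₂ + Q * geo r k j) [MOD m] := by
      calc x.val = x.val + 0 := by ring
        _ ≡ x.val + s₀ * geo r k j * geo r (k * j) e [MOD m] := Nat.ModEq.add_left _ C1.symm
        _ = X + s₀ * geo r k j := hiden
        _ ≡ d * a₂ + s₀ * geo r k j [MOD m] := Nat.ModEq.add_right _ hXc
        _ = s * geo r k j + d * (a₂ + Q * geo r k j) := by rw [hQ]; ring
    refine ⟨j, a₂ + Q * geo r k j, ?_⟩
    rw [hgv]
    exact velem_congr m n r hxc (Nat.ModEq.refl _)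
  · rintro ⟨j, a, rfl⟩
    have hbase : velem m n r (s₀ * geo r k j) (k * j) ∈ H := by
      rw [← velem_pow m n r hu]; exact H.pow_mem hv j
    have hda : ∀ a'' : ℕ, velem m n r (d * a'') 0 ∈ H := by
      intro a''
      have h1 : ((d * a'' : ℕ) : ZMod m) ∈ cam m d := cam_mem m d a''
      rw [← hDeq] at h1
      have h2 : velem m n r (d * a'') 0
          = (⟨Multiplicative.ofAdd ((d * a'' : ℕ) : ZMod m), 1⟩ : GG m n r) := by
        apply SemidirectProduct.ext
        · rfl
        · show Multiplicative.ofAdd ((0 : ℕ) : ZMod n) = 1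
          simp
      rw [h2]; exact h1
    set a' := r ^ (k * j * (n - 1)) * (a + Q * geo r k j * (m - 1)) with ha'
    have hprod := H.mul_mem hbase (hda a')
    rw [velem_mul m n r hu] at hprod
    have hcong : s₀ * geo r k j + r ^ (k * j) * (d * a')
        ≡ s * geo r k j + d * a [MOD m] := by
      have hr1 : r ^ (k * j) * a' ≡ a + Q * geo r k j * (m - 1) [MOD m] := by
        rw [ha', ← mul_assoc, ← pow_add]
        have h8 : k * j + k * j * (n - 1) = n * (k * j) := by
          have h9 : 1 + (n - 1) = n := by omega
          calc k * j + k * j * (n - 1) = (1 + (n - 1)) * (k * j) := by ring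
            _ = n * (k * j) := by rw [h9]
        rw [h8, pow_mul]
        have h10 : (r ^ n) ^ (k * j) ≡ 1 ^ (k * j) [MOD m] := hrn.pow _
        simpa using h10.mul_right (a + Q * geo r k j * (m - 1))
      have hr2 : d * (r ^ (k * j) * a') ≡ d * (a + Q * geo r k j * (m - 1)) [MOD m] :=
        hr1.mul_left d
      have hm0 : m ≡ 0 [MOD m] := (Nat.modEq_zero_iff_dvd).2 dvd_rfl
      calc s₀ * geo r k j + r ^ (k * j) * (d * a')
          = s * geo r k j + d * Q * geo r k j + d * (r ^ (k * j) * a') := by rw [hQ]; ring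
        _ ≡ s * geo r k j + d * Q * geo r k j + d * (a + Q * geo r k j * (m - 1)) [MOD m] :=
            Nat.ModEq.add_left _ hr2
        _ = s * geo r k j + d * a + d * Q * geo r k j * (1 + (m - 1)) := by ring
        _ = s * geo r k j + d * a + d * Q * geo r k j * m := by
            congr 2
            omega
        _ ≡ s * geo r k j + d * a + d * Q * geo r k j * 0 [MOD m] :=
            Nat.ModEq.add_left _ (hm0.mul_left _)
        _ = s * geo r k j + d * a := by ring
    have heq2 := velem_congr m n r (w := s₀ * geo r k j + r ^ (k * j) * (d * a'))
      (v := k * j + 0) hcong (show k * j + 0 ≡ k * j [MOD n] by rw [add_zero])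
    rw [heq2] at hprod
    exact hprod


end
end ZMproof

namespace ZMproof

lemma filter_card (d T : ℕ) (hd : 0 < d) :
    ((Finset.range d).filter (fun s => d ∣ s * T)).card = Nat.gcd d T := by
  classical
  set g := Nat.gcd d T with hg
  have hgpos : 0 < g := Nat.gcd_pos_of_pos_left _ hd
  have hgd : g ∣ d := Nat.gcd_dvd_left d T
  have hgT : g ∣ T := Nat.gcd_dvd_right d T
  set e := d / g with he
  have hge : g * e = d := Nat.mul_div_cancel' hgd
  have hepos : 0 < e := by
    rcases Nat.eq_zero_or_pos e with h | h
    · rw [h, mul_zero] at hge; omega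
    · exact h
  have hcond : ∀ s, d ∣ s * T ↔ e ∣ s := by
    intro s
    constructor
    · intro hdvd
      obtain ⟨t, hT⟩ := hgT
      have h1 : g * e ∣ g * (s * t) := by
        have hst : s * (g * t) = g * (s * t) := by ring
        rw [hT, hst] at hdvd
        rwa [hge]
      have h2 : e ∣ s * t := (mul_dvd_mul_iff_left hgpos.ne').1 h1
      have hcop : Nat.Coprime e t := by
        have hc := Nat.coprime_div_gcd_div_gcd hgpos
        rw [← hg, ← he] at hc
        rwa [hT, Nat.mul_div_cancel_left t hgpos] at hc
      exact hcop.dvd_of_dvd_mul_right h2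
    · rintro ⟨c, rfl⟩
      obtain ⟨t, ht⟩ := hgT
      exact ⟨c * t, by rw [← hge, ht]; ring⟩
  have hfc : (Finset.range d).filter (fun s => d ∣ s * T)
      = (Finset.range d).filter (fun s => e ∣ s) := by
    apply Finset.filter_congr
    intro s _
    simp [hcond s]
  rw [hfc]
  have himg : (Finset.range d).filter (fun s => e ∣ s)
      = (Finset.range g).image (fun t => t * e) := by
    ext s
    simp only [Finset.mem_filter, Finset.mem_range, Finset.mem_image]
    constructor
    · rintro ⟨hs, c, rfl⟩
      refine ⟨c, ?_, by ring⟩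
      have : c * e < g * e := by rw [hge]; linarith [hs]
      exact Nat.lt_of_mul_lt_mul_right this
    · rintro ⟨t, ht, rfl⟩
      exact ⟨by calc t * e < g * e := by exact (Nat.mul_lt_mul_right hepos).2 ht
                  _ = d := hge, ⟨t, by ring⟩⟩
  rw [himg, Finset.card_image_of_injective _ (mul_left_injective₀ hepos.ne'),
    Finset.card_range]

section
variable (m n r : ℕ) [NeZero m] [NeZero n]

/-- index type for the subgroups of `GG`. -/
abbrev Idx : Type :=
  Σ (d : {x // x ∈ m.divisors}) (k : {x // x ∈ n.divisors}),
    {s : ℕ // s ∈ (Finset.range d.1).filter (fun s => (d.1 : ℕ) ∣ s * geo r k.1 (n / k.1))}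

variable (hu : ((ru m n r : (ZMod m)ˣ) : ZMod m) = (r : ZMod m))

/-- the classification map. -/
noncomputable def toSub : Idx m n r → Subgroup (GG m n r) :=
  fun p => SS m n r hu p.1.1 p.2.1.1 p.2.2.1

include hu in
lemma toSub_bijective (hrn : r ^ n ≡ 1 [MOD m]) : Function.Bijective (toSub m n r hu) := by
  constructor
  · rintro ⟨⟨d, hdm⟩, ⟨k, hkm⟩, ⟨s, hsm⟩⟩ ⟨⟨d', hdm'⟩, ⟨k', hkm'⟩, ⟨s', hsm'⟩⟩ h
    simp only [Finset.mem_filter, Finset.mem_range] at hsm hsm'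
    have hcar : sset m n r d k s = sset m n r d' k' s' := by
      have := congrArg (fun (K : Subgroup (GG m n r)) => (K : Set (GG m n r))) h
      exact this
    obtain ⟨h1, h2, h3⟩ := sset_injective m n r (Nat.mem_divisors.1 hdm).1
      (Nat.mem_divisors.1 hkm).1 hsm.2 hsm.1 (Nat.mem_divisors.1 hdm').1
      (Nat.mem_divisors.1 hkm').1 hsm'.2 hsm'.1 hcar
    subst h1; subst h2; subst h3
    rfl
  · intro H
    obtain ⟨d, k, s, hd, hk, hslt, hsdvd, hset⟩ := sset_surjective m n r hu hrn H
    have hdm : d ∈ m.divisors := Nat.mem_divisors.2 ⟨hd, NeZero.ne m⟩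
    have hkm : k ∈ n.divisors := Nat.mem_divisors.2 ⟨hk, NeZero.ne n⟩
    have hsm : s ∈ (Finset.range d).filter (fun s => d ∣ s * geo r k (n / k)) := by
      simp only [Finset.mem_filter, Finset.mem_range]
      exact ⟨hslt, hsdvd⟩
    refine ⟨⟨⟨d, hdm⟩, ⟨k, hkm⟩, ⟨s, hsm⟩⟩, ?_⟩
    apply SetLike.coe_injective
    rw [hset]
    rfl

include hu in
theorem count_GG (hrn : r ^ n ≡ 1 [MOD m]) :
    Nat.card (Subgroup (GG m n r))
      = ∑ d ∈ m.divisors, ∑ k ∈ n.divisors, Nat.gcd d (geo r k (n / k)) := by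
  classical
  rw [← Nat.card_eq_of_bijective _ (toSub_bijective m n r hu hrn)]
  rw [Nat.card_eq_fintype_card, Fintype.card_sigma]
  rw [← Finset.sum_coe_sort m.divisors
    (fun d => ∑ k ∈ n.divisors, Nat.gcd d (geo r k (n / k)))]
  apply Finset.sum_congr rfl
  intro d _
  rw [Fintype.card_sigma]
  rw [← Finset.sum_coe_sort n.divisors (fun k => Nat.gcd (d : ℕ) (geo r k (n / k)))]
  apply Finset.sum_congr rfl
  intro k _
  rw [Fintype.card_coe, filter_card _ _ (Nat.pos_of_mem_divisors d.2)]

end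
end ZMproof

namespace ZMproof
section
variable (m n r : ℕ) [NeZero m] [NeZero n]

lemma nsq_cong : (n - 1) * (n - 1) ≡ 1 [MOD n] := by
  have hn : 0 < n := Nat.pos_of_ne_zero (NeZero.ne n)
  match n, hn with
  | 1, _ => exact Nat.modEq_one
  | (k + 2), _ =>
      have h : (k + 2 - 1) * (k + 2 - 1) = (k + 2) * k + 1 := by
        have h0 : k + 2 - 1 = k + 1 := rfl
        rw [h0]; ring
      rw [h]
      have h2 : (k + 2) * k ≡ 0 [MOD k + 2] := (Nat.modEq_zero_iff_dvd).2 ⟨k, rfl⟩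
      simpa using h2.add_right 1

variable (hu : ((ru m n r : (ZMod m)ˣ) : ZMod m) = (r : ZMod m))
include hu

lemma ga_pow (t : ℕ) : (velem m n r 1 0) ^ t = velem m n r t 0 := by
  rw [velem_pow m n r hu]
  have h1 : 1 * geo r 0 t = t := by simp [geo]
  rw [h1, zero_mul]

lemma gb_pow (t : ℕ) : (velem m n r 0 (n - 1)) ^ t = velem m n r 0 ((n - 1) * t) := by
  rw [velem_pow m n r hu, zero_mul]

lemma ga_pow_m : (velem m n r 1 0) ^ m = 1 := by
  rw [ga_pow m n r hu]
  exact (velem_congr m n r ((Nat.modEq_zero_iff_dvd).2 dvd_rfl) (Nat.ModEq.refl 0)).trans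
    (velem_one m n r)

lemma gb_pow_n : (velem m n r 0 (n - 1)) ^ n = 1 := by
  rw [gb_pow m n r hu]
  exact (velem_congr m n r (Nat.ModEq.refl 0)
    ((Nat.modEq_zero_iff_dvd).2 (dvd_mul_left n (n - 1)))).trans (velem_one m n r)

lemma gab_rel (hrn : r ^ n ≡ 1 [MOD m]) :
    velem m n r 1 0 * velem m n r 0 (n - 1)
      = velem m n r 0 (n - 1) * (velem m n r 1 0) ^ r := by
  have hn : 0 < n := Nat.pos_of_ne_zero (NeZero.ne n)
  rw [ga_pow m n r hu r, velem_mul m n r hu, velem_mul m n r hu]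
  simp only [pow_zero, mul_zero, add_zero, zero_add, one_mul]
  apply velem_congr
  · have h1 : r ^ (n - 1) * r = r ^ n := by
      rw [← pow_succ, Nat.sub_add_cancel hn]
    rw [h1]
    exact hrn.symm
  · exact Nat.ModEq.refl _

lemma lift_rels (hrn : r ^ n ≡ 1 [MOD m]) :
    ∀ w ∈ ZMrel m n r,
      FreeGroup.lift (![velem m n r 1 0, velem m n r 0 (n - 1)]) w = 1 := by
  intro w hw
  simp only [ZMrel, Set.mem_insert_iff, Set.mem_singleton_iff] at hw
  rcases hw with rfl | rfl | rfl
  · rw [map_pow, FreeGroup.lift_apply_of]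
    simpa using ga_pow_m m n r hu
  · rw [map_pow, FreeGroup.lift_apply_of]
    simpa using gb_pow_n m n r hu
  · simp only [map_mul, map_inv, map_pow, FreeGroup.lift_apply_of]
    have ha : (![velem m n r 1 0, velem m n r 0 (n - 1)]) (0 : Fin 2) = velem m n r 1 0 := rfl
    have hb : (![velem m n r 1 0, velem m n r 0 (n - 1)]) (1 : Fin 2)
        = velem m n r 0 (n - 1) := rfl
    rw [ha, hb]
    set A := velem m n r 1 0
    set B := velem m n r 0 (n - 1)
    have h3 : A * B = B * A ^ r := gab_rel m n r hu hrn
    calc B⁻¹ * A * B * (A ^ r)⁻¹ = B⁻¹ * (A * B) * (A ^ r)⁻¹ := by group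
      _ = B⁻¹ * (B * A ^ r) * (A ^ r)⁻¹ := by rw [h3]
      _ = 1 := by group

/-- the homomorphism from the presented group to the model group. -/
noncomputable def fwd (hrn : r ^ n ≡ 1 [MOD m]) : ZM m n r →* GG m n r :=
  PresentedGroup.toGroup (lift_rels m n r hu hrn)

lemma fwd_za (hrn : r ^ n ≡ 1 [MOD m]) :
    fwd m n r hu hrn (za m n r) = velem m n r 1 0 :=
  PresentedGroup.toGroup.of _

lemma fwd_zb (hrn : r ^ n ≡ 1 [MOD m]) :
    fwd m n r hu hrn (zb m n r) = velem m n r 0 (n - 1) :=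
  PresentedGroup.toGroup.of _

lemma fwd_surjective (hrn : r ^ n ≡ 1 [MOD m]) :
    Function.Surjective (fwd m n r hu hrn) := by
  intro g
  set x := Multiplicative.toAdd g.left with hx
  set y := Multiplicative.toAdd g.right with hy
  have hg : g = velem m n r x.val y.val := by
    have h1 : g = (⟨Multiplicative.ofAdd x, Multiplicative.ofAdd y⟩ : GG m n r) := by
      apply SemidirectProduct.ext
      · show g.left = Multiplicative.ofAdd (Multiplicative.toAdd g.left)
        rw [ofAdd_toAdd]
      · show g.right = Multiplicative.ofAdd (Multiplicative.toAdd g.right)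
        rw [ofAdd_toAdd]
    rw [h1, mk_velem m n r]
  refine ⟨za m n r ^ x.val * zb m n r ^ (y.val * (n - 1)), ?_⟩
  rw [map_mul, map_pow, map_pow, fwd_za m n r hu hrn, fwd_zb m n r hu hrn,
    ga_pow m n r hu, gb_pow m n r hu, velem_mul m n r hu]
  simp only [pow_zero, mul_zero, add_zero, zero_add, one_mul]
  rw [hg]
  apply velem_congr
  · exact Nat.ModEq.refl _
  · have h2 : (n - 1) * (y.val * (n - 1)) = y.val * ((n - 1) * (n - 1)) := by ring
    rw [h2]
    have h3 : y.val * ((n - 1) * (n - 1)) ≡ y.val * 1 [MOD n] :=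
      (nsq_cong n).mul_left y.val
    simpa using h3
end
end ZMproof

namespace ZMproof
section
variable (m n r : ℕ)

lemma zrel_one : ∀ w ∈ ZMrel m n r, PresentedGroup.mk (ZMrel m n r) w = 1 := fun _ hw =>
  (QuotientGroup.eq_one_iff _).2 (Subgroup.subset_normalClosure hw)

lemma za_pow_m : (za m n r) ^ m = 1 := by
  have h := zrel_one m n r (FreeGroup.of 0 ^ m) (by simp [ZMrel])
  rw [map_pow] at h
  exact h

lemma zb_pow_n : (zb m n r) ^ n = 1 := by
  have h := zrel_one m n r (FreeGroup.of 1 ^ n) (by simp [ZMrel])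
  rw [map_pow] at h
  exact h

lemma zconj : za m n r * zb m n r = zb m n r * (za m n r) ^ r := by
  have h := zrel_one m n r ((FreeGroup.of 1)⁻¹ * FreeGroup.of 0 * FreeGroup.of 1
    * (FreeGroup.of 0 ^ r)⁻¹) (by simp [ZMrel])
  rw [map_mul, map_mul, map_mul, map_inv, map_inv, map_pow] at h
  have h' : (zb m n r)⁻¹ * za m n r * zb m n r * ((za m n r) ^ r)⁻¹ = 1 := h
  calc za m n r * zb m n r
      = zb m n r * ((zb m n r)⁻¹ * za m n r * zb m n r * ((za m n r) ^ r)⁻¹)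
        * (za m n r) ^ r := by group
    _ = zb m n r * 1 * (za m n r) ^ r := by rw [h']
    _ = zb m n r * (za m n r) ^ r := by group

lemma az_pow_congr {a b : ℕ} (h : a ≡ b [MOD m]) : (za m n r) ^ a = (za m n r) ^ b := by
  rw [pow_eq_pow_mod a (za_pow_m m n r), pow_eq_pow_mod b (za_pow_m m n r), h]

lemma zb_pow_congr {a b : ℕ} (h : a ≡ b [MOD n]) : (zb m n r) ^ a = (zb m n r) ^ b := by
  rw [pow_eq_pow_mod a (zb_pow_n m n r), pow_eq_pow_mod b (zb_pow_n m n r), h]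

lemma comm_pow : ∀ w : ℕ, (za m n r) ^ w * zb m n r = zb m n r * (za m n r) ^ (r * w) := by
  intro w
  induction w with
  | zero => simp
  | succ w ih =>
      calc (za m n r) ^ (w + 1) * zb m n r = (za m n r) ^ w * (za m n r * zb m n r) := by
            rw [pow_succ]; group
        _ = (za m n r) ^ w * zb m n r * (za m n r) ^ r := by rw [zconj]; group
        _ = zb m n r * (za m n r) ^ (r * w) * (za m n r) ^ r := by rw [ih]
        _ = zb m n r * (za m n r) ^ (r * (w + 1)) := by
            rw [mul_assoc, ← pow_add]
            have h : r * w + r = r * (w + 1) := by ring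
            rw [h]

lemma comm_pow2 : ∀ t w : ℕ,
    (za m n r) ^ w * (zb m n r) ^ t = (zb m n r) ^ t * (za m n r) ^ (r ^ t * w) := by
  intro t
  induction t with
  | zero => simp
  | succ t ih =>
      intro w
      calc (za m n r) ^ w * (zb m n r) ^ (t + 1)
          = ((za m n r) ^ w * (zb m n r) ^ t) * zb m n r := by rw [pow_succ]; group
        _ = (zb m n r) ^ t * ((za m n r) ^ (r ^ t * w) * zb m n r) := by rw [ih]; group
        _ = (zb m n r) ^ t * (zb m n r * (za m n r) ^ (r * (r ^ t * w))) := by rw [comm_pow]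
        _ = (zb m n r) ^ (t + 1) * (za m n r) ^ (r ^ (t + 1) * w) := by
            rw [pow_succ]
            have h : r * (r ^ t * w) = r ^ (t + 1) * w := by ring
            rw [h]; group

lemma comm_rev (hrn : r ^ n ≡ 1 [MOD m]) (hn : 0 < n) (t w : ℕ) :
    (zb m n r) ^ t * (za m n r) ^ w
      = (za m n r) ^ (w * r ^ (t * (n - 1))) * (zb m n r) ^ t := by
  have h1 := comm_pow2 m n r t (w * r ^ (t * (n - 1)))
  have h2 : (za m n r) ^ (r ^ t * (w * r ^ (t * (n - 1)))) = (za m n r) ^ w := by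
    apply az_pow_congr
    have h3 : r ^ t * (w * r ^ (t * (n - 1))) = w * (r ^ n) ^ t := by
      rw [← pow_mul]
      have h4 : t + t * (n - 1) = n * t := by
        have h5 : 1 + (n - 1) = n := by omega
        calc t + t * (n - 1) = t * (1 + (n - 1)) := by ring
          _ = n * t := by rw [h5]; ring
      calc r ^ t * (w * r ^ (t * (n - 1))) = w * r ^ (t + t * (n - 1)) := by
            rw [pow_add]; ring
        _ = w * r ^ (n * t) := by rw [h4]
    rw [h3]
    have h5 : (r ^ n) ^ t ≡ 1 ^ t [MOD m] := hrn.pow t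
    simpa using h5.mul_left w
  rw [h1, h2]

/-- The subgroup of normal forms. -/
def SZ (hrn : r ^ n ≡ 1 [MOD m]) (hm : 0 < m) (hn : 0 < n) : Subgroup (ZM m n r) where
  carrier := Set.range (fun p : ℕ × ℕ => (za m n r) ^ p.1 * (zb m n r) ^ p.2)
  one_mem' := ⟨(0, 0), by simp⟩
  mul_mem' := by
    rintro _ _ ⟨⟨i, j⟩, rfl⟩ ⟨⟨i', j'⟩, rfl⟩
    refine ⟨(i + i' * r ^ (j * (n - 1)), j + j'), ?_⟩
    show (za m n r) ^ (i + i' * r ^ (j * (n - 1))) * (zb m n r) ^ (j + j')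
      = (za m n r) ^ i * (zb m n r) ^ j * ((za m n r) ^ i' * (zb m n r) ^ j')
    calc (za m n r) ^ (i + i' * r ^ (j * (n - 1))) * (zb m n r) ^ (j + j')
        = (za m n r) ^ i * ((za m n r) ^ (i' * r ^ (j * (n - 1))) * (zb m n r) ^ j)
            * (zb m n r) ^ j' := by rw [pow_add, pow_add]; group
      _ = (za m n r) ^ i * ((zb m n r) ^ j * (za m n r) ^ i') * (zb m n r) ^ j' := by
            rw [← comm_rev m n r hrn hn]
      _ = _ := by group
  inv_mem' := by
    rintro _ ⟨⟨i, j⟩, rfl⟩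
    set E := i * (m - 1) * r ^ (j * (n - 1) * (n - 1)) with hE
    refine ⟨(E, j * (n - 1)), ?_⟩
    show (za m n r) ^ E * (zb m n r) ^ (j * (n - 1))
      = ((za m n r) ^ i * (zb m n r) ^ j)⁻¹
    rw [eq_inv_iff_mul_eq_one]
    have hm1 : m - 1 + 1 = m := by omega
    have hn1 : n - 1 + 1 = n := by omega
    calc (za m n r) ^ E * (zb m n r) ^ (j * (n - 1)) * ((za m n r) ^ i * (zb m n r) ^ j)
        = (za m n r) ^ E * ((zb m n r) ^ (j * (n - 1)) * (za m n r) ^ i)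
          * (zb m n r) ^ j := by group
      _ = (za m n r) ^ E * ((za m n r) ^ (i * r ^ (j * (n - 1) * (n - 1)))
          * (zb m n r) ^ (j * (n - 1))) * (zb m n r) ^ j := by
            rw [comm_rev m n r hrn hn]
      _ = (za m n r) ^ (E + i * r ^ (j * (n - 1) * (n - 1)))
          * (zb m n r) ^ (j * (n - 1) + j) := by rw [pow_add, pow_add]; group
      _ = 1 := by
          have h1 : E + i * r ^ (j * (n - 1) * (n - 1)) ≡ 0 [MOD m] := by
            apply (Nat.modEq_zero_iff_dvd).2
            refine ⟨i * r ^ (j * (n - 1) * (n - 1)), ?_⟩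
            rw [hE]
            calc i * (m - 1) * r ^ (j * (n - 1) * (n - 1))
                  + i * r ^ (j * (n - 1) * (n - 1))
                = i * r ^ (j * (n - 1) * (n - 1)) * ((m - 1) + 1) := by ring
              _ = m * (i * r ^ (j * (n - 1) * (n - 1))) := by rw [hm1]; ring
          have h2 : j * (n - 1) + j = n * j := by
            calc j * (n - 1) + j = j * ((n - 1) + 1) := by ring
              _ = n * j := by rw [hn1]; ring
          rw [az_pow_congr m n r h1, h2, pow_mul, zb_pow_n, pow_zero, one_pow, one_mul]

end
end ZMproof

namespace ZMproof
section
variable (m n r : ℕ)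

lemma normal_form (hrn : r ^ n ≡ 1 [MOD m]) (hm : 0 < m) (hn : 0 < n) (x : ZM m n r) :
    ∃ i j : ℕ, x = (za m n r) ^ i * (zb m n r) ^ j := by
  have hx : x ∈ SZ m n r hrn hm hn := by
    apply PresentedGroup.generated_by
    intro jj
    fin_cases jj
    · exact ⟨(1, 0), by simp [za]⟩
    · exact ⟨(0, 1), by simp [zb]⟩
  obtain ⟨⟨i, j⟩, hij⟩ := hx
  exact ⟨i, j, hij.symm⟩

lemma zm_surj (hrn : r ^ n ≡ 1 [MOD m]) (hm : 0 < m) (hn : 0 < n) :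
    Function.Surjective (fun p : ZMod m × ZMod n =>
      (za m n r) ^ (p.1.val) * (zb m n r) ^ (p.2.val)) := by
  haveI : NeZero m := ⟨hm.ne'⟩
  haveI : NeZero n := ⟨hn.ne'⟩
  intro x
  obtain ⟨i, j, rfl⟩ := normal_form m n r hrn hm hn x
  refine ⟨((i : ZMod m), (j : ZMod n)), ?_⟩
  show (za m n r) ^ ((i : ZMod m)).val * (zb m n r) ^ ((j : ZMod n)).val = _
  rw [ZMod.val_natCast, ZMod.val_natCast]
  rw [az_pow_congr m n r (Nat.mod_modEq i m), zb_pow_congr m n r (Nat.mod_modEq j n)]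

lemma zm_finite (hrn : r ^ n ≡ 1 [MOD m]) (hm : 0 < m) (hn : 0 < n) : Finite (ZM m n r) := by
  haveI : NeZero m := ⟨hm.ne'⟩
  haveI : NeZero n := ⟨hn.ne'⟩
  exact Finite.of_surjective _ (zm_surj m n r hrn hm hn)

lemma zm_card_le (hrn : r ^ n ≡ 1 [MOD m]) (hm : 0 < m) (hn : 0 < n) :
    Nat.card (ZM m n r) ≤ m * n := by
  haveI : NeZero m := ⟨hm.ne'⟩
  haveI : NeZero n := ⟨hn.ne'⟩
  have h := Nat.card_le_card_of_surjective _ (zm_surj m n r hrn hm hn)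
  calc Nat.card (ZM m n r) ≤ Nat.card (ZMod m × ZMod n) := h
    _ = m * n := by rw [Nat.card_prod, Nat.card_zmod, Nat.card_zmod]

lemma gg_card [NeZero m] [NeZero n] : Nat.card (GG m n r) = m * n := by
  rw [Nat.card_congr (ggEquiv m n r)]
  rw [Nat.card_prod]
  rw [Nat.card_congr (Multiplicative.toAdd (α := ZMod m)),
    Nat.card_congr (Multiplicative.toAdd (α := ZMod n)), Nat.card_zmod, Nat.card_zmod]

lemma fwd_bijective [NeZero m] [NeZero n]
    (hu : ((ru m n r : (ZMod m)ˣ) : ZMod m) = (r : ZMod m)) (hrn : r ^ n ≡ 1 [MOD m]) :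
    Function.Bijective (fwd m n r hu hrn) := by
  have hm : 0 < m := Nat.pos_of_ne_zero (NeZero.ne m)
  have hn : 0 < n := Nat.pos_of_ne_zero (NeZero.ne n)
  haveI : Finite (ZM m n r) := zm_finite m n r hrn hm hn
  rw [Nat.bijective_iff_surjective_and_card]
  refine ⟨fwd_surjective m n r hu hrn, le_antisymm ?_ ?_⟩
  · rw [gg_card m n r]
    exact zm_card_le m n r hrn hm hn
  · exact Nat.card_le_card_of_surjective _ (fwd_surjective m n r hu hrn)

end

lemma subgroup_card_eq {A B : Type*} [Group A] [Group B] (e : A ≃* B) :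
    Nat.card (Subgroup A) = Nat.card (Subgroup B) := by
  apply Nat.card_congr
  refine ⟨Subgroup.map e.toMonoidHom, Subgroup.map e.symm.toMonoidHom, ?_, ?_⟩
  · intro K
    rw [Subgroup.map_map]
    have h : (e.symm.toMonoidHom.comp e.toMonoidHom) = MonoidHom.id A := by
      ext x; simp
    rw [h, Subgroup.map_id]
  · intro K
    rw [Subgroup.map_map]
    have h : (e.toMonoidHom.comp e.symm.toMonoidHom) = MonoidHom.id B := by
      ext x; simp
    rw [h, Subgroup.map_id]

end ZMproof

namespace ZMproof

lemma geo_eq_div {r k n : ℕ} (hr2 : 2 ≤ r) (hk : k ∣ n) (hkpos : 0 < k) :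
    geo r k (n / k) = (r ^ n - 1) / (r ^ k - 1) := by
  set q := n / k with hq
  have hkq : k * q = n := Nat.mul_div_cancel' hk
  have hkr : 1 ≤ r ^ k := Nat.one_le_pow _ _ (by omega)
  have hnr : 1 ≤ r ^ n := Nat.one_le_pow _ _ (by omega)
  have hZ : ((r : ℤ) ^ k - 1) * (geo r k q : ℤ) = (r : ℤ) ^ n - 1 := by
    have hgs := geom_sum_mul ((r : ℤ) ^ k) q
    have hcast : (geo r k q : ℤ) = ∑ i ∈ Finset.range q, ((r : ℤ) ^ k) ^ i := by
      unfold geo; push_cast; rfl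
    rw [hcast, mul_comm, hgs, ← pow_mul, hkq]
  have hN : r ^ n - 1 = (r ^ k - 1) * geo r k q := by
    have h1 : ((r ^ n - 1 : ℕ) : ℤ) = (((r ^ k - 1) * geo r k q : ℕ) : ℤ) := by
      push_cast [Nat.cast_sub hkr, Nat.cast_sub hnr]
      rw [← hZ]
    exact_mod_cast h1
  have hpos : 0 < r ^ k - 1 := by
    have : r ≤ r ^ k := Nat.le_self_pow hkpos.ne' r
    omega
  rw [hN, Nat.mul_div_cancel_left _ hpos]

end ZMproof

/-- The total number of subgroups of `ZM(m,n,r)` equals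
`∑_{m₁ ∣ m} ∑_{n₁ ∣ n} gcd(m₁, (r^n−1)/(r^{n₁}−1))`. -/
theorem card_subgroups_ZM (m n r : ℕ)
    (hm : 0 < m) (hn : 0 < n) (hr : 0 < r)
    (h1 : Nat.gcd m n = 1) (h2 : Nat.gcd m (r - 1) = 1) (h3 : r ^ n ≡ 1 [MOD m]) :
    Nat.card (Subgroup (ZM m n r)) =
      ∑ m₁ ∈ m.divisors, ∑ n₁ ∈ n.divisors,
        Nat.gcd m₁ ((r ^ n - 1) / (r ^ n₁ - 1)) := by
  haveI : NeZero m := ⟨hm.ne'⟩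
  haveI : NeZero n := ⟨hn.ne'⟩
  have hro : ((r : ZMod m)) ^ n = 1 := by
    have h4 := (ZMod.natCast_eq_natCast_iff (r ^ n) 1 m).2 h3
    push_cast at h4
    exact h4
  have hunit : IsUnit ((r : ZMod m)) := by
    apply IsUnit.of_mul_eq_one ((r : ZMod m) ^ (n - 1))
    rw [← pow_succ', Nat.sub_add_cancel hn]
    exact hro
  have hu := ZMproof.ru_coe m n r ⟨hro, hunit⟩
  have e := MulEquiv.ofBijective _ (ZMproof.fwd_bijective m n r hu h3)
  rw [ZMproof.subgroup_card_eq e, ZMproof.count_GG m n r hu h3]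
  apply Finset.sum_congr rfl
  intro d hd
  apply Finset.sum_congr rfl
  intro k hk
  by_cases hr1 : r = 1
  · subst hr1
    have hm1 : m = 1 := by
      have := h2
      simp at this
      exact this
    have hd1 : d = 1 := Nat.dvd_one.1 (by rw [← hm1]; exact (Nat.mem_divisors.1 hd).1)
    subst hd1
    rw [Nat.gcd_one_left, Nat.gcd_one_left]
  · have hr2 : 2 ≤ r := by omega
    congr 1
    exact ZMproof.geo_eq_div hr2 (Nat.mem_divisors.1 hk).1 (Nat.pos_of_mem_divisors hk)
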